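/- For Comp_k ∈ {Top_k, Rand_k} and any m ≥ 2, the operator x ↦ (‖Comp_k(x)‖_m / k) · SignComp_k(x) is a compression operator with coefficient γ_m = k^{2/m − 1}/d: for every x ∈ ℝ^d, E‖x − (‖Comp_k(x)‖_m/k)·SignComp_k(x)‖₂² ≤ [1 − k^{2/m−1}/d]‖x‖₂². -/

import Mathlib

open Finset

lemma sum_pow_le_pow_sum' {ι : Type*} (T : Finset ι) (a : ι → ℝ) (ha : ∀ j ∈ T, 0 ≤ a j)
    {m : ℕ} (hm : 1 ≤ m) : ∑ j ∈ T, a j ^ m ≤ (∑ j ∈ T, a j) ^ m := by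
  have hS : 0 ≤ ∑ j ∈ T, a j := Finset.sum_nonneg ha
  calc ∑ j ∈ T, a j ^ m ≤ ∑ j ∈ T, a j * (∑ j ∈ T, a j) ^ (m - 1) := by
        refine Finset.sum_le_sum fun j hj => ?_
        have h1 : a j ^ m = a j * a j ^ (m - 1) := by
          rw [← pow_succ']; congr 1; omega
        rw [h1]
        exact mul_le_mul_of_nonneg_left
          (pow_le_pow_left₀ (ha j hj) (Finset.single_le_sum ha hj) _) (ha j hj)
    _ = (∑ j ∈ T, a j) ^ m := by
        rw [← Finset.sum_mul, ← pow_succ']; congr 1; omega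

/-- Pointwise key bound. -/
lemma key_pointwise (d k m : ℕ) (hk : 1 ≤ k) (hm : 2 ≤ m)
    (x : Fin d → ℝ) (T : Finset (Fin d)) (hT : T.card ≤ k) :
    ∑ i, (x i - ((∑ j ∈ T, |x j| ^ (m : ℝ)) ^ (m : ℝ)⁻¹ / k) *
        (if i ∈ T then (if 0 ≤ x i then (1 : ℝ) else -1) else 0)) ^ 2 ≤
      ∑ i, x i ^ 2 - (k : ℝ) ^ (2 / (m : ℝ) - 2) * ∑ j ∈ T, x j ^ 2 := by
  have hk0 : (0 : ℝ) < k := by exact_mod_cast hk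
  have hm0 : (0 : ℝ) < m := by positivity
  set A : ℝ := ∑ j ∈ T, |x j| ^ (m : ℝ) with hA_def
  have hA : 0 ≤ A := Finset.sum_nonneg fun j _ => Real.rpow_nonneg (abs_nonneg _) _
  set g : ℝ := A ^ (m : ℝ)⁻¹ with hg_def
  have hg : 0 ≤ g := Real.rpow_nonneg hA _
  set c : ℝ := g / k with hc_def
  have hc : 0 ≤ c := div_nonneg hg hk0.le
  -- expansion
  have expand : ∀ i : Fin d,
      (x i - c * (if i ∈ T then (if 0 ≤ x i then (1 : ℝ) else -1) else 0)) ^ 2 =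
      x i ^ 2 - 2 * c * (if i ∈ T then |x i| else 0) + c ^ 2 * (if i ∈ T then 1 else 0) := by
    intro i
    by_cases hi : i ∈ T
    · by_cases h0 : 0 ≤ x i
      · simp [hi, h0, abs_of_nonneg h0]; ring
      · simp [hi, h0, abs_of_neg (lt_of_not_ge h0)]; ring
    · simp [hi]
  have sum_eq : ∑ i, (x i - c * (if i ∈ T then (if 0 ≤ x i then (1 : ℝ) else -1) else 0)) ^ 2 =
      ∑ i, x i ^ 2 - 2 * c * (∑ j ∈ T, |x j|) + c ^ 2 * T.card := by
    simp only [expand]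
    rw [Finset.sum_add_distrib, Finset.sum_sub_distrib, ← Finset.mul_sum, ← Finset.mul_sum]
    congr 2
    · rw [Finset.sum_ite_mem, Finset.univ_inter]
    · rw [Finset.sum_ite_mem, Finset.univ_inter, Finset.sum_const, nsmul_eq_mul, mul_one]
  -- ℓm ≤ ℓ1 : g ≤ ∑_{j∈T} |x j|
  have hL1 : g ≤ ∑ j ∈ T, |x j| := by
    have h1 : A ≤ (∑ j ∈ T, |x j|) ^ (m : ℕ) := by
      rw [hA_def]
      calc ∑ j ∈ T, |x j| ^ (m : ℝ) = ∑ j ∈ T, |x j| ^ (m : ℕ) := by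
            refine Finset.sum_congr rfl fun j _ => ?_
            rw [Real.rpow_natCast]
        _ ≤ _ := sum_pow_le_pow_sum' T _ (fun j _ => abs_nonneg _) (by omega)
    have hSnn : 0 ≤ ∑ j ∈ T, |x j| := Finset.sum_nonneg fun j _ => abs_nonneg _
    calc g ≤ ((∑ j ∈ T, |x j|) ^ (m : ℕ)) ^ (m : ℝ)⁻¹ :=
          Real.rpow_le_rpow hA h1 (by positivity)
      _ = ∑ j ∈ T, |x j| := by
          rw [← Real.rpow_natCast (∑ j ∈ T, |x j|) m, ← Real.rpow_mul hSnn,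
            mul_inv_cancel₀ (ne_of_gt hm0), Real.rpow_one]
  -- Hölder : ∑_{j∈T} x j ^2 ≤ card^(1-2/m) * A^(2/m)
  have hHolder : ∑ j ∈ T, x j ^ 2 ≤ (T.card : ℝ) ^ (1 - 2 / (m : ℝ)) * A ^ (2 / (m : ℝ)) := by
    have hp : (1 : ℝ) ≤ (m : ℝ) / 2 := by
      rw [le_div_iff₀ (by norm_num)]
      exact_mod_cast (by omega : 2 ≤ m)
    have := Real.inner_le_weight_mul_Lp_of_nonneg T hp (fun _ => 1) (fun j => x j ^ 2)
      (fun _ => zero_le_one) (fun j => sq_nonneg _)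
    simp only [one_mul] at this
    have hpow : ∀ j : Fin d, (x j ^ 2) ^ ((m : ℝ) / 2) = |x j| ^ (m : ℝ) := by
      intro j
      rw [← sq_abs, ← Real.rpow_natCast |x j| 2, ← Real.rpow_mul (abs_nonneg _)]
      congr 1
      push_cast
      ring
    simp only [hpow] at this
    calc ∑ j ∈ T, x j ^ 2 ≤ (∑ _j ∈ T, (1:ℝ)) ^ (1 - ((m:ℝ)/2)⁻¹) * A ^ ((m:ℝ)/2)⁻¹ := this
      _ = (T.card : ℝ) ^ (1 - 2 / (m : ℝ)) * A ^ (2 / (m : ℝ)) := by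
          rw [Finset.sum_const, nsmul_eq_mul, mul_one]
          congr 2 <;> rw [inv_div] <;> ring
  -- g^2 = A^(2/m)
  have hg2 : g ^ 2 = A ^ (2 / (m : ℝ)) := by
    rw [hg_def, ← Real.rpow_natCast (A ^ (m:ℝ)⁻¹) 2, ← Real.rpow_mul hA]
    congr 1
    push_cast; ring
  -- combine
  rw [sum_eq]
  have step1 : ∑ i, x i ^ 2 - 2 * c * (∑ j ∈ T, |x j|) + c ^ 2 * T.card ≤
      ∑ i, x i ^ 2 - g ^ 2 / k := by
    have h1 : 2 * c * g ≤ 2 * c * (∑ j ∈ T, |x j|) :=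
      mul_le_mul_of_nonneg_left hL1 (by positivity)
    have h2 : c ^ 2 * T.card ≤ c ^ 2 * k :=
      mul_le_mul_of_nonneg_left (by exact_mod_cast hT) (sq_nonneg _)
    have hcalc : ∑ i, x i ^ 2 - 2 * c * g + c ^ 2 * k = ∑ i, x i ^ 2 - g ^ 2 / k := by
      rw [hc_def]; field_simp; ring
    nlinarith [h1, h2, hcalc]
  refine step1.trans ?_
  have step2 : (k : ℝ) ^ (2 / (m : ℝ) - 2) * ∑ j ∈ T, x j ^ 2 ≤ g ^ 2 / k := by
    have hx : (k : ℝ) ^ (2 / (m : ℝ) - 2) * ∑ j ∈ T, x j ^ 2 ≤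
        (k : ℝ) ^ (2 / (m : ℝ) - 2) * ((T.card : ℝ) ^ (1 - 2 / (m : ℝ)) * A ^ (2 / (m : ℝ)))
        := mul_le_mul_of_nonneg_left hHolder (Real.rpow_nonneg hk0.le _)
    refine hx.trans ?_
    have hcard : (T.card : ℝ) ^ (1 - 2 / (m : ℝ)) ≤ (k : ℝ) ^ (1 - 2 / (m : ℝ)) := by
      refine Real.rpow_le_rpow (Nat.cast_nonneg _) (by exact_mod_cast hT) ?_
      have : 2 / (m : ℝ) ≤ 1 := by
        rw [div_le_one hm0]; exact_mod_cast (by omega : 2 ≤ m)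
      linarith
    have : (k : ℝ) ^ (2 / (m : ℝ) - 2) * ((T.card : ℝ) ^ (1 - 2 / (m : ℝ)) * A ^ (2 / (m : ℝ)))
        ≤ (k : ℝ) ^ (2 / (m : ℝ) - 2) * ((k : ℝ) ^ (1 - 2 / (m : ℝ)) * A ^ (2 / (m : ℝ))) := by
      refine mul_le_mul_of_nonneg_left
        (mul_le_mul_of_nonneg_right hcard (Real.rpow_nonneg hA _))
        (Real.rpow_nonneg hk0.le _)
    refine this.trans (le_of_eq ?_)
    rw [hg2, ← mul_assoc, ← Real.rpow_add hk0]
    have : 2 / (m : ℝ) - 2 + (1 - 2 / (m : ℝ)) = -1 := by ring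
    rw [this, Real.rpow_neg_one]
    ring
  linarith

open MeasureTheory

/-- Sign composition, `m ≥ 2` case: the operator
`x ↦ (‖Comp_k(x)‖_m / k) · SignComp_k(x)` is a compression operator with coefficient
`k^{2/m-1}/d`. The (possibly random) support `S ω` of `Comp_k(x)` has at most `k`
elements, and satisfies `E ‖Comp_k(x)‖₂² ≥ (k/d)‖x‖₂²`. -/
theorem sign_composed_compression_m_ge_two {Ω : Type*} [MeasurableSpace Ω]
    (μ : Measure Ω) [IsProbabilityMeasure μ]
    (d k m : ℕ) (hk : 1 ≤ k) (hkd : k ≤ d) (hm : 2 ≤ m)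
    (x : Fin d → ℝ) (S : Ω → Finset (Fin d))
    (hcard : ∀ ω, (S ω).card ≤ k)
    (hlower : (k : ℝ) / d * ∑ i, (x i) ^ 2 ≤ ∫ ω, ∑ i ∈ S ω, (x i) ^ 2 ∂μ)
    (hSint : Integrable (fun ω => ∑ i ∈ S ω, (x i) ^ 2) μ)
    (hint : Integrable (fun ω => ∑ i,
      (x i - ((∑ j ∈ S ω, |x j| ^ (m : ℝ)) ^ (m : ℝ)⁻¹ / k) *
        (if i ∈ S ω then (if 0 ≤ x i then (1 : ℝ) else -1) else 0)) ^ 2) μ) :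
    ∫ ω, ∑ i, (x i - ((∑ j ∈ S ω, |x j| ^ (m : ℝ)) ^ (m : ℝ)⁻¹ / k) *
        (if i ∈ S ω then (if 0 ≤ x i then (1 : ℝ) else -1) else 0)) ^ 2 ∂μ ≤
      (1 - (k : ℝ) ^ (2 / (m : ℝ) - 1) / d) * ∑ i, (x i) ^ 2 := by
  have hk0 : (0 : ℝ) < k := by exact_mod_cast hk
  have hd0 : (0 : ℝ) < d := by
    have : 1 ≤ d := le_trans hk hkd
    exact_mod_cast this
  set C : ℝ := (k : ℝ) ^ (2 / (m : ℝ) - 2) with hC_def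
  have hC : 0 ≤ C := Real.rpow_nonneg hk0.le _
  have hf : Integrable (fun _ : Ω => ∑ i, x i ^ 2) μ := integrable_const _
  have hf2 : Integrable (fun ω => C * ∑ i ∈ S ω, x i ^ 2) μ := hSint.const_mul C
  have step1 : ∫ ω, ∑ i, (x i - ((∑ j ∈ S ω, |x j| ^ (m : ℝ)) ^ (m : ℝ)⁻¹ / k) *
        (if i ∈ S ω then (if 0 ≤ x i then (1 : ℝ) else -1) else 0)) ^ 2 ∂μ ≤
      ∫ ω, (∑ i, x i ^ 2 - C * ∑ i ∈ S ω, x i ^ 2) ∂μ := by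
    refine integral_mono hint (hf.sub hf2) fun ω => ?_
    exact key_pointwise d k m hk hm x (S ω) (hcard ω)
  have step2 : ∫ ω, (∑ i, x i ^ 2 - C * ∑ i ∈ S ω, x i ^ 2) ∂μ =
      ∑ i, x i ^ 2 - C * ∫ ω, ∑ i ∈ S ω, x i ^ 2 ∂μ := by
    rw [integral_sub hf hf2, integral_const, integral_const_mul, probReal_univ, one_smul]
  have hCk : C * (k : ℝ) = (k : ℝ) ^ (2 / (m : ℝ) - 1) := by
    rw [hC_def, show 2 / (m : ℝ) - 1 = 2 / (m : ℝ) - 2 + 1 by ring,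
      Real.rpow_add hk0, Real.rpow_one]
  have step3 : ∑ i, x i ^ 2 - C * ∫ ω, ∑ i ∈ S ω, x i ^ 2 ∂μ ≤
      (1 - (k : ℝ) ^ (2 / (m : ℝ) - 1) / d) * ∑ i, x i ^ 2 := by
    have h1 : C * ((k : ℝ) / d * ∑ i, x i ^ 2) ≤ C * ∫ ω, ∑ i ∈ S ω, x i ^ 2 ∂μ :=
      mul_le_mul_of_nonneg_left hlower hC
    have h2 : C * ((k : ℝ) / d * ∑ i, x i ^ 2) =
        (k : ℝ) ^ (2 / (m : ℝ) - 1) / d * ∑ i, x i ^ 2 := by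
      rw [← hCk]; field_simp
    nlinarith [h1, h2]
  linarith [step1, step2.le, step2.ge, step3]
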